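/- arXiv:1805.00454 — 2 statements merged into one kernel-verified Lean document; each statement's English description precedes it below -/
import Mathlib

section
/- Let f : ℝ^d → ℝ^d∪{∞} be a function and define the Julia set J(f) as the union of the closure of O⁻_f(∞) with the set of points x outside this closure such that every neighbourhood U_x of x contained in the complement of the closure of O⁻_f(∞) has forward orbit with finite complement. If O⁻_f(∞) is infinite, then J(f) equals the closure of O⁻_f(∞). -/
open Filter Topology OnePoint

theorem stmt1 {d : ℕ}
    (f : EuclideanSpace ℝ (Fin d) → OnePoint (EuclideanSpace ℝ (Fin d)))
    (F : OnePoint (EuclideanSpace ℝ (Fin d)) → OnePoint (EuclideanSpace ℝ (Fin d)))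
    (hFinfty : F ∞ = ∞) (hFf : ∀ z : EuclideanSpace ℝ (Fin d), F ↑z = f z)
    (hBw : (⋃ m : ℕ, F^[m] ⁻¹' {∞}).Infinite) :
    ({x | x ∉ closure (⋃ m : ℕ, F^[m] ⁻¹' {∞}) ∧
        ∀ U ∈ 𝓝 x, U ⊆ (closure (⋃ m : ℕ, F^[m] ⁻¹' {∞}))ᶜ →
          ((⋃ m : ℕ, F^[m] '' U)ᶜ).Finite}
      ∪ closure (⋃ m : ℕ, F^[m] ⁻¹' {∞}))
      = closure (⋃ m : ℕ, F^[m] ⁻¹' {∞}) := by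
  set B := ⋃ m : ℕ, F^[m] ⁻¹' {∞} with hB
  apply Set.union_eq_self_of_subset_left
  intro x hx
  exfalso
  obtain ⟨hx1, hx2⟩ := hx
  have hU : (closure B)ᶜ ∈ 𝓝 x :=
    (isClosed_closure.isOpen_compl).mem_nhds hx1
  have hfin := hx2 _ hU (subset_refl _)
  apply hBw
  apply hfin.subset
  intro y hy
  intro hy'
  obtain ⟨_, ⟨m, rfl⟩, u, hu, rfl⟩ := hy'
  obtain ⟨_, ⟨k, rfl⟩, hk⟩ := hy
  apply hu
  apply subset_closure
  exact Set.mem_iUnion.2 ⟨k + m, by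
    simpa [Function.iterate_add_apply] using hk⟩
end

section
/- Combining forward and backward invariance: let f : D → X be a continuous open map on an open D ⊆ X, ∞ ∈ X, J = closure(⋃_{m≥0} f^{-m}(∞)). Then for x ∈ D: x ∈ J \ {∞} if and only if f(x) ∈ J. -/
open Filter Topology

theorem stmt11 {X : Type*} [TopologicalSpace X] [T1Space X] (f : X → X) (D : Set X)
    (hD : IsOpen D) (hc : ContinuousOn f D)
    (hopen : ∀ U : Set X, U ⊆ D → IsOpen U → IsOpen (f '' U)) (infty : X)
    (hinftyD : infty ∉ D)
    (hsub : (⋃ m : ℕ, f^[m] ⁻¹' {infty}) \ {infty} ⊆ D)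
    (x : X) (hxD : x ∈ D) :
    x ∈ closure (⋃ m : ℕ, f^[m] ⁻¹' {infty}) \ {infty} ↔
      f x ∈ closure (⋃ m : ℕ, f^[m] ⁻¹' {infty}) := by
  set A := ⋃ m : ℕ, f^[m] ⁻¹' {infty} with hA
  have hxne : x ≠ infty := fun h => hinftyD (h ▸ hxD)
  constructor
  · rintro ⟨hxJ, -⟩
    have h1 : x ∈ closure (A \ {infty}) := by
      have hsplit : closure A ⊆ closure (A \ {infty}) ∪ {infty} := by
        calc closure A ⊆ closure ((A \ {infty}) ∪ {infty}) := by
              apply closure_mono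
              intro y hy
              by_cases hy' : y = infty
              · exact Or.inr hy'
              · exact Or.inl ⟨hy, hy'⟩
          _ = closure (A \ {infty}) ∪ closure {infty} := closure_union
          _ = closure (A \ {infty}) ∪ {infty} := by rw [closure_singleton]
      rcases hsplit hxJ with h | h
      · exact h
      · exact absurd h hxne
    have hcw : ContinuousWithinAt f (A \ {infty}) x := (hc x hxD).mono hsub
    have h2 := hcw.mem_closure_image h1
    refine closure_mono ?_ h2
    rintro _ ⟨y, ⟨hyA, hyne⟩, rfl⟩
    simp only [hA, Set.mem_iUnion, Set.mem_preimage, Set.mem_singleton_iff] at hyA ⊢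
    obtain ⟨m, hm⟩ := hyA
    cases m with
    | zero => exact absurd hm hyne
    | succ n => exact ⟨n, by rw [← Function.iterate_succ_apply]; exact hm⟩
  · intro hfx
    refine ⟨?_, hxne⟩
    by_contra hxJ
    set U := (closure A)ᶜ with hU
    have hUopen : IsOpen U := isOpen_compl_iff.mpr isClosed_closure
    have hxU : x ∈ U := hxJ
    have hV : IsOpen (f '' (U ∩ D)) := hopen _ Set.inter_subset_right (hUopen.inter hD)
    have hfxV : f x ∈ f '' (U ∩ D) := ⟨x, ⟨hxU, hxD⟩, rfl⟩
    obtain ⟨z, hz1, hz2⟩ := mem_closure_iff.mp hfx _ hV hfxV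
    obtain ⟨y, ⟨hyU, _⟩, rfl⟩ := hz1
    apply hyU
    apply subset_closure
    simp only [hA, Set.mem_iUnion, Set.mem_preimage, Set.mem_singleton_iff] at hz2 ⊢
    obtain ⟨m, hm⟩ := hz2
    exact ⟨m + 1, by rw [Function.iterate_succ_apply]; exact hm⟩
end
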